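/- Consider the complex Lie algebra structure equations dω¹ = A ω¹∧(ω³+ω̄³), dω² = −A ω²∧(ω³+ω̄³), dω³ = G₁₁ ω¹∧ω̄¹ + G₁₂ ω¹∧ω̄² + conj(G₁₂) ω²∧ω̄¹ + G₂₂ ω²∧ω̄², with A, G₁₂ ∈ ℂ, G₁₁, G₂₂ ∈ ℝ. Then d² = 0 (the Jacobi identity holds) if and only if (A+conj(A))G₁₁ = 0, (A+conj(A))G₂₂ = 0, and (A−conj(A))G₁₂ = 0. -/
import Mathlib

noncomputable section

/-- The space of invariant complex forms: the exterior algebra over the span of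
`ω¹, ω², ω³, ω̄¹, ω̄², ω̄³` (indexed `0,…,5`). -/
abbrev Lambda : Type := ExteriorAlgebra ℂ (Fin 6 → ℂ)

/-- The generators `ω¹, ω², ω³, ω̄¹, ω̄², ω̄³` as degree-one elements. -/
def w (i : Fin 6) : Lambda := ExteriorAlgebra.ι ℂ (Pi.single i 1)

/-- `D` is an antiderivation (degree `+1` Leibniz rule against `1`-forms), the
defining extension property of the Chevalley–Eilenberg differential. -/
def IsAntideriv (D : Lambda →ₗ[ℂ] Lambda) : Prop :=
  D 1 = 0 ∧ ∀ (v : Fin 6 → ℂ) (x : Lambda),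
    D (ExteriorAlgebra.ι ℂ v * x) =
      D (ExteriorAlgebra.ι ℂ v) * x - ExteriorAlgebra.ι ℂ v * D x

lemma w_sq (i : Fin 6) : w i * w i = 0 := ExteriorAlgebra.ι_sq_zero _

lemma w_swap (i j : Fin 6) : w j * w i = -(w i * w j) :=
  eq_neg_of_add_eq_zero_left (by
    simpa [w] using ExteriorAlgebra.ι_add_mul_swap (R := ℂ)
      (Pi.single i (1:ℂ)) (Pi.single j (1:ℂ)))

lemma w_swap' (i j : Fin 6) (x : Lambda) : w j * (w i * x) = -(w i * (w j * x)) := by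
  rw [← mul_assoc, w_swap, ← mul_assoc, neg_mul]

lemma w_sq' (i : Fin 6) (x : Lambda) : w i * (w i * x) = 0 := by
  rw [← mul_assoc, w_sq, zero_mul]

def sg (a : Fin 6) : Fin 6 → ℂ := Pi.single a 1

/-- coefficient-extraction functional: coefficient of `w i ∧ w j ∧ w k` in degree 3 -/
def phi (i j k : Fin 6) : Lambda →ₗ[ℂ] ℂ :=
  ExteriorAlgebra.liftAlternating fun n =>
    match n with
    | 3 => (Matrix.detRowAlternating : ((Fin 3 → ℂ) [⋀^Fin 3]→ₗ[ℂ] ℂ)).compLinearMap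
        (LinearMap.funLeft ℂ ℂ ![i, j, k])
    | _ => 0

lemma phi_w (i j k a b c : Fin 6) :
    phi i j k (w a * (w b * w c)) =
      Matrix.det (Matrix.of ![![sg a i, sg a j, sg a k],
        ![sg b i, sg b j, sg b k],
        ![sg c i, sg c j, sg c k]]) := by
  unfold phi w
  rw [ExteriorAlgebra.liftAlternating_ι_mul, ExteriorAlgebra.liftAlternating_ι_mul,
    ExteriorAlgebra.liftAlternating_ι]
  show (Matrix.detRowAlternating : ((Fin 3 → ℂ) [⋀^Fin 3]→ₗ[ℂ] ℂ)).compLinearMap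
      (LinearMap.funLeft ℂ ℂ ![i, j, k])
      ![Pi.single a 1, Pi.single b 1, Pi.single c 1] = _
  simp only [AlternatingMap.compLinearMap_apply, Matrix.detRowAlternating, LinearMap.funLeft_apply]
  congr 1
  funext r s
  fin_cases r <;> fin_cases s <;> simp [sg, Matrix.of_apply, Matrix.vecHead, Matrix.vecTail]

lemma v023_023 : phi 0 2 3 (w 0 * (w 2 * w 3)) = 1 := by
  rw [phi_w]; simp +decide [sg, Matrix.det_fin_three, Pi.single_apply, Matrix.vecHead, Matrix.vecTail]
lemma v023_035 : phi 0 2 3 (w 0 * (w 3 * w 5)) = 0 := by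
  rw [phi_w]; simp +decide [sg, Matrix.det_fin_three, Pi.single_apply, Matrix.vecHead, Matrix.vecTail]
lemma v023_024 : phi 0 2 3 (w 0 * (w 2 * w 4)) = 0 := by
  rw [phi_w]; simp +decide [sg, Matrix.det_fin_three, Pi.single_apply, Matrix.vecHead, Matrix.vecTail]
lemma v023_045 : phi 0 2 3 (w 0 * (w 4 * w 5)) = 0 := by
  rw [phi_w]; simp +decide [sg, Matrix.det_fin_three, Pi.single_apply, Matrix.vecHead, Matrix.vecTail]
lemma v023_123 : phi 0 2 3 (w 1 * (w 2 * w 3)) = 0 := by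
  rw [phi_w]; simp +decide [sg, Matrix.det_fin_three, Pi.single_apply, Matrix.vecHead, Matrix.vecTail]
lemma v023_135 : phi 0 2 3 (w 1 * (w 3 * w 5)) = 0 := by
  rw [phi_w]; simp +decide [sg, Matrix.det_fin_three, Pi.single_apply, Matrix.vecHead, Matrix.vecTail]
lemma v023_124 : phi 0 2 3 (w 1 * (w 2 * w 4)) = 0 := by
  rw [phi_w]; simp +decide [sg, Matrix.det_fin_three, Pi.single_apply, Matrix.vecHead, Matrix.vecTail]
lemma v023_145 : phi 0 2 3 (w 1 * (w 4 * w 5)) = 0 := by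
  rw [phi_w]; simp +decide [sg, Matrix.det_fin_three, Pi.single_apply, Matrix.vecHead, Matrix.vecTail]
lemma v024_023 : phi 0 2 4 (w 0 * (w 2 * w 3)) = 0 := by
  rw [phi_w]; simp +decide [sg, Matrix.det_fin_three, Pi.single_apply, Matrix.vecHead, Matrix.vecTail]
lemma v024_035 : phi 0 2 4 (w 0 * (w 3 * w 5)) = 0 := by
  rw [phi_w]; simp +decide [sg, Matrix.det_fin_three, Pi.single_apply, Matrix.vecHead, Matrix.vecTail]
lemma v024_024 : phi 0 2 4 (w 0 * (w 2 * w 4)) = 1 := by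
  rw [phi_w]; simp +decide [sg, Matrix.det_fin_three, Pi.single_apply, Matrix.vecHead, Matrix.vecTail]
lemma v024_045 : phi 0 2 4 (w 0 * (w 4 * w 5)) = 0 := by
  rw [phi_w]; simp +decide [sg, Matrix.det_fin_three, Pi.single_apply, Matrix.vecHead, Matrix.vecTail]
lemma v024_123 : phi 0 2 4 (w 1 * (w 2 * w 3)) = 0 := by
  rw [phi_w]; simp +decide [sg, Matrix.det_fin_three, Pi.single_apply, Matrix.vecHead, Matrix.vecTail]
lemma v024_135 : phi 0 2 4 (w 1 * (w 3 * w 5)) = 0 := by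
  rw [phi_w]; simp +decide [sg, Matrix.det_fin_three, Pi.single_apply, Matrix.vecHead, Matrix.vecTail]
lemma v024_124 : phi 0 2 4 (w 1 * (w 2 * w 4)) = 0 := by
  rw [phi_w]; simp +decide [sg, Matrix.det_fin_three, Pi.single_apply, Matrix.vecHead, Matrix.vecTail]
lemma v024_145 : phi 0 2 4 (w 1 * (w 4 * w 5)) = 0 := by
  rw [phi_w]; simp +decide [sg, Matrix.det_fin_three, Pi.single_apply, Matrix.vecHead, Matrix.vecTail]
lemma v124_023 : phi 1 2 4 (w 0 * (w 2 * w 3)) = 0 := by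
  rw [phi_w]; simp +decide [sg, Matrix.det_fin_three, Pi.single_apply, Matrix.vecHead, Matrix.vecTail]
lemma v124_035 : phi 1 2 4 (w 0 * (w 3 * w 5)) = 0 := by
  rw [phi_w]; simp +decide [sg, Matrix.det_fin_three, Pi.single_apply, Matrix.vecHead, Matrix.vecTail]
lemma v124_024 : phi 1 2 4 (w 0 * (w 2 * w 4)) = 0 := by
  rw [phi_w]; simp +decide [sg, Matrix.det_fin_three, Pi.single_apply, Matrix.vecHead, Matrix.vecTail]
lemma v124_045 : phi 1 2 4 (w 0 * (w 4 * w 5)) = 0 := by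
  rw [phi_w]; simp +decide [sg, Matrix.det_fin_three, Pi.single_apply, Matrix.vecHead, Matrix.vecTail]
lemma v124_123 : phi 1 2 4 (w 1 * (w 2 * w 3)) = 0 := by
  rw [phi_w]; simp +decide [sg, Matrix.det_fin_three, Pi.single_apply, Matrix.vecHead, Matrix.vecTail]
lemma v124_135 : phi 1 2 4 (w 1 * (w 3 * w 5)) = 0 := by
  rw [phi_w]; simp +decide [sg, Matrix.det_fin_three, Pi.single_apply, Matrix.vecHead, Matrix.vecTail]
lemma v124_124 : phi 1 2 4 (w 1 * (w 2 * w 4)) = 1 := by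
  rw [phi_w]; simp +decide [sg, Matrix.det_fin_three, Pi.single_apply, Matrix.vecHead, Matrix.vecTail]
lemma v124_145 : phi 1 2 4 (w 1 * (w 4 * w 5)) = 0 := by
  rw [phi_w]; simp +decide [sg, Matrix.det_fin_three, Pi.single_apply, Matrix.vecHead, Matrix.vecTail]

set_option maxHeartbeats 2000000 in
/-- for the structure equations
`dω¹ = A ω¹∧(ω³+ω̄³)`, `dω² = −A ω²∧(ω³+ω̄³)`,
`dω³ = G₁₁ ω¹∧ω̄¹ + G₁₂ ω¹∧ω̄² + Ḡ₁₂ ω²∧ω̄¹ + G₂₂ ω²∧ω̄²` (`G₁₁, G₂₂` real),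
one has `d² = 0` iff `(A+Ā)G₁₁ = 0`, `(A+Ā)G₂₂ = 0` and `(A−Ā)G₁₂ = 0`. -/
theorem stmt9 (A G12 : ℂ) (G11 G22 : ℝ)
    (D : Lambda →ₗ[ℂ] Lambda) (hD : IsAntideriv D)
    (h1 : D (w 0) = A • (w 0 * (w 2 + w 5)))
    (h2 : D (w 1) = -A • (w 1 * (w 2 + w 5)))
    (h3 : D (w 2) = (G11 : ℂ) • (w 0 * w 3) + G12 • (w 0 * w 4) +
      (starRingEnd ℂ) G12 • (w 1 * w 3) + (G22 : ℂ) • (w 1 * w 4))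
    (h4 : D (w 3) = (starRingEnd ℂ) A • (w 3 * (w 5 + w 2)))
    (h5 : D (w 4) = -(starRingEnd ℂ) A • (w 4 * (w 5 + w 2)))
    (h6 : D (w 5) = (G11 : ℂ) • (w 3 * w 0) + (starRingEnd ℂ) G12 • (w 3 * w 1) +
      G12 • (w 4 * w 0) + (G22 : ℂ) • (w 4 * w 1)) :
    (∀ x : Lambda, D (D x) = 0) ↔
      ((A + (starRingEnd ℂ) A) * G11 = 0 ∧ (A + (starRingEnd ℂ) A) * G22 = 0 ∧
        (A - (starRingEnd ℂ) A) * G12 = 0) := by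
  have hL : ∀ (i : Fin 6) (x : Lambda), D (w i * x) = D (w i) * x - w i * D x :=
    fun i x => hD.2 (Pi.single i 1) x
  -- the key computation: D (D (w 2)) as a linear combination of monomials
  have e2 : D (D (w 2)) =
      ((A + starRingEnd ℂ A) * G11) • (w 0 * (w 2 * w 3))
    - ((A + starRingEnd ℂ A) * G11) • (w 0 * (w 3 * w 5))
    + ((A - starRingEnd ℂ A) * G12) • (w 0 * (w 2 * w 4))
    - ((A - starRingEnd ℂ A) * G12) • (w 0 * (w 4 * w 5))
    - ((A - starRingEnd ℂ A) * starRingEnd ℂ G12) • (w 1 * (w 2 * w 3))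
    + ((A - starRingEnd ℂ A) * starRingEnd ℂ G12) • (w 1 * (w 3 * w 5))
    - ((A + starRingEnd ℂ A) * G22) • (w 1 * (w 2 * w 4))
    + ((A + starRingEnd ℂ A) * G22) • (w 1 * (w 4 * w 5)) := by
    rw [h3]
    simp only [map_add, map_smul, hL, h1, h2, h4, h5]
    simp only [mul_add, add_mul, smul_mul_assoc, mul_smul_comm, neg_smul, smul_neg,
      smul_sub, smul_add, smul_smul, mul_assoc, neg_mul, mul_neg, sub_eq_add_neg, neg_add, neg_neg]
    simp only [w_swap 0 1, w_swap 0 2, w_swap 0 3, w_swap 0 4, w_swap 0 5,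
      w_swap 1 2, w_swap 1 3, w_swap 1 4, w_swap 1 5, w_swap 2 3, w_swap 2 4,
      w_swap 2 5, w_swap 3 4, w_swap 3 5, w_swap 4 5,
      w_swap' 0 1, w_swap' 0 2, w_swap' 0 3, w_swap' 0 4, w_swap' 0 5,
      w_swap' 1 2, w_swap' 1 3, w_swap' 1 4, w_swap' 1 5, w_swap' 2 3, w_swap' 2 4,
      w_swap' 2 5, w_swap' 3 4, w_swap' 3 5, w_swap' 4 5, w_sq, w_sq',
      mul_neg, neg_mul, smul_neg, neg_neg, mul_zero, smul_zero, zero_mul]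
    module
  constructor
  · -- forward: d² = 0 implies the three scalar equations
    intro hDD
    have hz := e2.symm.trans (hDD (w 2))
    have k1 := congrArg (phi 0 2 3) hz
    have k2 := congrArg (phi 0 2 4) hz
    have k3 := congrArg (phi 1 2 4) hz
    simp only [map_add, map_sub, map_smul, map_zero, v023_023, v023_035, v023_024, v023_045, v023_123, v023_135, v023_124, v023_145, v024_023, v024_035, v024_024, v024_045, v024_123, v024_135, v024_124, v024_145, v124_023, v124_035, v124_024, v124_045, v124_123, v124_135, v124_124, v124_145, smul_eq_mul, mul_one,
      mul_zero, add_zero, zero_add, sub_zero, zero_sub, neg_eq_zero] at k1 k2 k3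
    exact ⟨k1, k3, k2⟩
  · -- backward: the scalar equations imply d² = 0
    rintro ⟨hc1, hc2, hc3⟩
    have hc3' : (A - starRingEnd ℂ A) * starRingEnd ℂ G12 = 0 := by
      have h := congrArg (starRingEnd ℂ) hc3
      simp only [map_mul, map_sub, RingHomCompTriple.comp_apply, RingHom.id_apply, map_zero,
        Complex.conj_conj] at h
      linear_combination -h
    -- D (D (w i)) = 0 for each generator
    have e0 : D (D (w 0)) = 0 := by
      rw [h1]
      simp only [map_add, map_smul, hL, h1, h2, h3, h4, h5, h6]
      simp only [mul_add, add_mul, smul_mul_assoc, mul_smul_comm, neg_smul, smul_neg,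
        smul_sub, smul_add, smul_smul, mul_assoc, neg_mul, mul_neg, sub_eq_add_neg, neg_add, neg_neg]
      simp only [w_swap 0 1, w_swap 0 2, w_swap 0 3, w_swap 0 4, w_swap 0 5,
        w_swap 1 2, w_swap 1 3, w_swap 1 4, w_swap 1 5, w_swap 2 3, w_swap 2 4,
        w_swap 2 5, w_swap 3 4, w_swap 3 5, w_swap 4 5,
        w_swap' 0 1, w_swap' 0 2, w_swap' 0 3, w_swap' 0 4, w_swap' 0 5,
        w_swap' 1 2, w_swap' 1 3, w_swap' 1 4, w_swap' 1 5, w_swap' 2 3, w_swap' 2 4,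
        w_swap' 2 5, w_swap' 3 4, w_swap' 3 5, w_swap' 4 5, w_sq, w_sq',
        mul_neg, neg_mul, smul_neg, neg_neg, mul_zero, smul_zero, zero_mul]
      module
    have e1 : D (D (w 1)) = 0 := by
      rw [h2]
      simp only [map_add, map_smul, hL, h1, h2, h3, h4, h5, h6]
      simp only [mul_add, add_mul, smul_mul_assoc, mul_smul_comm, neg_smul, smul_neg,
        smul_sub, smul_add, smul_smul, mul_assoc, neg_mul, mul_neg, sub_eq_add_neg, neg_add, neg_neg]
      simp only [w_swap 0 1, w_swap 0 2, w_swap 0 3, w_swap 0 4, w_swap 0 5,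
        w_swap 1 2, w_swap 1 3, w_swap 1 4, w_swap 1 5, w_swap 2 3, w_swap 2 4,
        w_swap 2 5, w_swap 3 4, w_swap 3 5, w_swap 4 5,
        w_swap' 0 1, w_swap' 0 2, w_swap' 0 3, w_swap' 0 4, w_swap' 0 5,
        w_swap' 1 2, w_swap' 1 3, w_swap' 1 4, w_swap' 1 5, w_swap' 2 3, w_swap' 2 4,
        w_swap' 2 5, w_swap' 3 4, w_swap' 3 5, w_swap' 4 5, w_sq, w_sq',
        mul_neg, neg_mul, smul_neg, neg_neg, mul_zero, smul_zero, zero_mul]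
      module
    have e3 : D (D (w 3)) = 0 := by
      rw [h4]
      simp only [map_add, map_smul, hL, h1, h2, h3, h4, h5, h6]
      simp only [mul_add, add_mul, smul_mul_assoc, mul_smul_comm, neg_smul, smul_neg,
        smul_sub, smul_add, smul_smul, mul_assoc, neg_mul, mul_neg, sub_eq_add_neg, neg_add, neg_neg]
      simp only [w_swap 0 1, w_swap 0 2, w_swap 0 3, w_swap 0 4, w_swap 0 5,
        w_swap 1 2, w_swap 1 3, w_swap 1 4, w_swap 1 5, w_swap 2 3, w_swap 2 4,
        w_swap 2 5, w_swap 3 4, w_swap 3 5, w_swap 4 5,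
        w_swap' 0 1, w_swap' 0 2, w_swap' 0 3, w_swap' 0 4, w_swap' 0 5,
        w_swap' 1 2, w_swap' 1 3, w_swap' 1 4, w_swap' 1 5, w_swap' 2 3, w_swap' 2 4,
        w_swap' 2 5, w_swap' 3 4, w_swap' 3 5, w_swap' 4 5, w_sq, w_sq',
        mul_neg, neg_mul, smul_neg, neg_neg, mul_zero, smul_zero, zero_mul]
      module
    have e4 : D (D (w 4)) = 0 := by
      rw [h5]
      simp only [map_add, map_smul, hL, h1, h2, h3, h4, h5, h6]
      simp only [mul_add, add_mul, smul_mul_assoc, mul_smul_comm, neg_smul, smul_neg,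
        smul_sub, smul_add, smul_smul, mul_assoc, neg_mul, mul_neg, sub_eq_add_neg, neg_add, neg_neg]
      simp only [w_swap 0 1, w_swap 0 2, w_swap 0 3, w_swap 0 4, w_swap 0 5,
        w_swap 1 2, w_swap 1 3, w_swap 1 4, w_swap 1 5, w_swap 2 3, w_swap 2 4,
        w_swap 2 5, w_swap 3 4, w_swap 3 5, w_swap 4 5,
        w_swap' 0 1, w_swap' 0 2, w_swap' 0 3, w_swap' 0 4, w_swap' 0 5,
        w_swap' 1 2, w_swap' 1 3, w_swap' 1 4, w_swap' 1 5, w_swap' 2 3, w_swap' 2 4,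
        w_swap' 2 5, w_swap' 3 4, w_swap' 3 5, w_swap' 4 5, w_sq, w_sq',
        mul_neg, neg_mul, smul_neg, neg_neg, mul_zero, smul_zero, zero_mul]
      module
    have e2' : D (D (w 2)) = 0 := by
      rw [e2, hc1, hc2, hc3, hc3']
      simp
    have e5 : D (D (w 5)) =
        ((A + starRingEnd ℂ A) * G11) • (w 0 * (w 3 * w 5))
      - ((A + starRingEnd ℂ A) * G11) • (w 0 * (w 2 * w 3))
      - ((A - starRingEnd ℂ A) * starRingEnd ℂ G12) • (w 1 * (w 3 * w 5))
      + ((A - starRingEnd ℂ A) * starRingEnd ℂ G12) • (w 1 * (w 2 * w 3))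
      + ((A - starRingEnd ℂ A) * G12) • (w 0 * (w 4 * w 5))
      - ((A - starRingEnd ℂ A) * G12) • (w 0 * (w 2 * w 4))
      + ((A + starRingEnd ℂ A) * G22) • (w 1 * (w 2 * w 4))
      - ((A + starRingEnd ℂ A) * G22) • (w 1 * (w 4 * w 5)) := by
      rw [h6]
      simp only [map_add, map_smul, hL, h1, h2, h4, h5]
      simp only [mul_add, add_mul, smul_mul_assoc, mul_smul_comm, neg_smul, smul_neg,
        smul_sub, smul_add, smul_smul, mul_assoc, neg_mul, mul_neg, sub_eq_add_neg, neg_add, neg_neg]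
      simp only [w_swap 0 1, w_swap 0 2, w_swap 0 3, w_swap 0 4, w_swap 0 5,
        w_swap 1 2, w_swap 1 3, w_swap 1 4, w_swap 1 5, w_swap 2 3, w_swap 2 4,
        w_swap 2 5, w_swap 3 4, w_swap 3 5, w_swap 4 5,
        w_swap' 0 1, w_swap' 0 2, w_swap' 0 3, w_swap' 0 4, w_swap' 0 5,
        w_swap' 1 2, w_swap' 1 3, w_swap' 1 4, w_swap' 1 5, w_swap' 2 3, w_swap' 2 4,
        w_swap' 2 5, w_swap' 3 4, w_swap' 3 5, w_swap' 4 5, w_sq, w_sq',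
        mul_neg, neg_mul, smul_neg, neg_neg, mul_zero, smul_zero, zero_mul]
      module
    have e5' : D (D (w 5)) = 0 := by
      rw [e5, hc1, hc2, hc3, hc3']
      simp
    have hdd_w : ∀ i : Fin 6, D (D (w i)) = 0 := by
      intro i
      fin_cases i
      exacts [e0, e1, e2', e3, e4, e5']
    -- pair Leibniz rule
    have hpair : ∀ (a b : Fin 6) (y : Lambda),
        D (w a * w b * y) = D (w a * w b) * y + (w a * w b) * D y := by
      intro a b y
      rw [mul_assoc, hL a, hL b, hL a]
      noncomm_ring
    set S : Submodule ℂ Lambda :=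
      Submodule.span ℂ {z : Lambda | ∃ a b : Fin 6, z = w a * w b} with hS
    have hspan : ∀ x2 : Lambda, x2 ∈ S →
        ∀ y, D (x2 * y) = D x2 * y + x2 * D y := by
      intro x2 hx2
      induction hx2 using Submodule.span_induction with
      | mem z hz =>
        obtain ⟨a, b, rfl⟩ := hz
        exact hpair a b
      | zero => intro y; simp
      | add u v _ _ hu hv =>
        intro y
        simp only [add_mul, map_add, hu, hv]
        abel
      | smul c u _ hu =>
        intro y
        simp only [smul_mul_assoc, map_smul, hu, smul_add]
    have hmem : ∀ a b : Fin 6, w a * w b ∈ S := fun a b => Submodule.subset_span ⟨a, b, rfl⟩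
    have hDw_mem : ∀ i : Fin 6, D (w i) ∈ S := by
      intro i
      have m1 : D (w 0) ∈ S := by
        rw [h1, mul_add, smul_add]
        exact add_mem (S.smul_mem _ (hmem 0 2)) (S.smul_mem _ (hmem 0 5))
      have m2 : D (w 1) ∈ S := by
        rw [h2, mul_add, smul_add]
        exact add_mem (S.smul_mem _ (hmem 1 2)) (S.smul_mem _ (hmem 1 5))
      have m3 : D (w 2) ∈ S := by
        rw [h3]
        exact add_mem (add_mem (add_mem (S.smul_mem _ (hmem 0 3)) (S.smul_mem _ (hmem 0 4)))
          (S.smul_mem _ (hmem 1 3))) (S.smul_mem _ (hmem 1 4))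
      have m4 : D (w 3) ∈ S := by
        rw [h4, mul_add, smul_add]
        exact add_mem (S.smul_mem _ (hmem 3 5)) (S.smul_mem _ (hmem 3 2))
      have m5 : D (w 4) ∈ S := by
        rw [h5, mul_add, smul_add]
        exact add_mem (S.smul_mem _ (hmem 4 5)) (S.smul_mem _ (hmem 4 2))
      have m6 : D (w 5) ∈ S := by
        rw [h6]
        exact add_mem (add_mem (add_mem (S.smul_mem _ (hmem 3 0)) (S.smul_mem _ (hmem 3 1)))
          (S.smul_mem _ (hmem 4 0))) (S.smul_mem _ (hmem 4 1))
      fin_cases i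
      exacts [m1, m2, m3, m4, m5, m6]
    -- decompose a general ι v
    have hiota : ∀ v : Fin 6 → ℂ, ExteriorAlgebra.ι ℂ v = ∑ i, v i • w i := by
      intro v
      conv_lhs => rw [← Finset.univ_sum_single v]
      rw [map_sum]
      refine Finset.sum_congr rfl fun i _ => ?_
      rw [show Pi.single i (v i) = v i • (Pi.single i 1 : Fin 6 → ℂ) by
        funext j; by_cases h : j = i <;> simp [h, Pi.single_apply], map_smul]
      rfl
    have hdd_iota : ∀ v, D (D (ExteriorAlgebra.ι ℂ v)) = 0 := by
      intro v
      rw [hiota, map_sum, map_sum]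
      refine Finset.sum_eq_zero fun i _ => ?_
      rw [map_smul, map_smul, hdd_w, smul_zero]
    have hDiota_mem : ∀ v, D (ExteriorAlgebra.ι ℂ v) ∈ S := by
      intro v
      rw [hiota, map_sum]
      exact Submodule.sum_mem _ fun i _ => by rw [map_smul]; exact S.smul_mem _ (hDw_mem i)
    have key : ∀ x : Lambda, ∀ y, D (D y) = 0 → D (D (x * y)) = 0 := by
      intro x
      induction x using ExteriorAlgebra.induction with
      | algebraMap r =>
        intro y hy
        rw [Algebra.algebraMap_eq_smul_one, smul_mul_assoc, one_mul, map_smul, map_smul, hy,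
          smul_zero]
      | ι v =>
        intro y hy
        rw [hD.2 v y, map_sub, hspan _ (hDiota_mem v) y, hD.2 v (D y), hdd_iota, hy, mul_zero,
          zero_mul, zero_add, sub_zero, sub_self]
      | mul a b ha hb =>
        intro y hy
        rw [mul_assoc]
        exact ha _ (hb _ hy)
      | add a b ha hb =>
        intro y hy
        rw [add_mul, map_add, map_add, ha _ hy, hb _ hy, add_zero]
    intro x
    have := key x 1 (by rw [hD.1, map_zero])
    rwa [mul_one] at this
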